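/- Let N ≥ 1, let B be an N×N integer matrix, let u ∈ {1,…,N}, let B₋ be the single Cuntz splice of B at u, and let B₋₋ be the double Cuntz splice of B at u. If x ∈ ℤ^{N+4} satisfies (B₋ ⊕ (−I₂))ᵀ x = 0, then x_{N+1} = x_{N+3} = x_{N+4} = 0, x_u + x_{N+2} = 0, and moreover B₋₋ᵀ x = 0; in other words, the kernel of the transpose of B₋ ⊕ (−I₂) is contained in the kernel of the transpose of B₋₋. -/
import Mathlib


open Matrix

/-- The single Cuntz splice `B₋` of `B` at `u`, augmented by `-I₂`, i.e. the matrix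
`B₋ ⊕ (-I₂)` where the indices `N+1, N+2` (the splice) are modelled as
`Sum.inr 0, Sum.inr 1` and the indices `N+3, N+4` (carrying `-I₂`) as
`Sum.inr 2, Sum.inr 3`. -/
def cuntzSpliceOnceExt {N : ℕ} (B : Matrix (Fin N) (Fin N) ℤ) (u : Fin N) :
    Matrix (Fin N ⊕ Fin 4) (Fin N ⊕ Fin 4) ℤ :=
  fun i j => match i, j with
  | Sum.inl i, Sum.inl j => B i j
  | Sum.inl i, Sum.inr k => if i = u ∧ k = 0 then 1 else 0
  | Sum.inr k, Sum.inl j => if k = 0 ∧ j = u then 1 else 0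
  | Sum.inr k, Sum.inr l => !![0, 1, 0, 0; 1, 0, 0, 0; 0, 0, -1, 0; 0, 0, 0, -1] k l

/-- The double Cuntz splice `B₋₋` of `B` at `u`, with the four new indices
`N+1, …, N+4` modelled as `Sum.inr 0, …, Sum.inr 3`. -/
def cuntzSpliceTwice {N : ℕ} (B : Matrix (Fin N) (Fin N) ℤ) (u : Fin N) :
    Matrix (Fin N ⊕ Fin 4) (Fin N ⊕ Fin 4) ℤ :=
  fun i j => match i, j with
  | Sum.inl i, Sum.inl j => B i j
  | Sum.inl i, Sum.inr k => if i = u ∧ k = 0 then 1 else 0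
  | Sum.inr k, Sum.inl j => if k = 0 ∧ j = u then 1 else 0
  | Sum.inr k, Sum.inr l => !![0, 1, 1, 0; 1, 0, 0, 0; 1, 0, 0, 1; 0, 0, 1, 0] k l

/-- Any vector in the kernel of `(B₋ ⊕ (-I₂))ᵀ` vanishes at the coordinates
`N+1, N+3, N+4`, satisfies `x_u + x_{N+2} = 0`, and lies in the kernel of `B₋₋ᵀ`. -/
theorem ker_transpose_spliceOnceExt_subset_ker_transpose_spliceTwice
    (N : ℕ) (hN : 1 ≤ N) (B : Matrix (Fin N) (Fin N) ℤ) (u : Fin N)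
    (x : Fin N ⊕ Fin 4 → ℤ)
    (hx : (cuntzSpliceOnceExt B u).transpose.mulVec x = 0) :
    x (Sum.inr 0) = 0 ∧ x (Sum.inr 2) = 0 ∧ x (Sum.inr 3) = 0 ∧
    x (Sum.inl u) + x (Sum.inr 1) = 0 ∧
    (cuntzSpliceTwice B u).transpose.mulVec x = 0 := by
  have h := fun j => congrFun hx j
  simp only [mulVec, dotProduct, transpose_apply, cuntzSpliceOnceExt,
    Fintype.sum_sum_type, Fin.sum_univ_four, Pi.zero_apply] at h
  have h0 := h (Sum.inr 0)
  have h1 := h (Sum.inr 1)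
  have h2 := h (Sum.inr 2)
  have h3 := h (Sum.inr 3)
  simp [Matrix.vecHead, Matrix.vecTail] at h0 h1 h2 h3
  refine ⟨h1, h2, h3, h0, ?_⟩
  funext j
  cases j with
  | inl j =>
    have hj := h (Sum.inl j)
    simp only [mulVec, dotProduct, transpose_apply, cuntzSpliceTwice,
      Fintype.sum_sum_type, Fin.sum_univ_four, Pi.zero_apply]
    simp [Matrix.vecHead, Matrix.vecTail] at hj ⊢
    linarith [hj]
  | inr k =>
    simp only [mulVec, dotProduct, transpose_apply, cuntzSpliceTwice,
      Fintype.sum_sum_type, Fin.sum_univ_four, Pi.zero_apply]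
    fin_cases k <;>
      simp [Matrix.vecHead, Matrix.vecTail] <;>
      linarith [h0, h1, h2, h3]
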